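/- Fix p ∈ ℕ and let (X, X̃) be a random vector in ℝ^p × ℝ^p with square-integrable coordinates such that for every subset S ⊆ {1,…,p} the law of swap_S(X, X̃) equals the law of (X, X̃). Then the knockoff-diagnostic statistic has expectation zero: E[ Σ_{j ≠ k} ( X̃_j X̃_k + 2 X_j X̃_k − 3 X_j X_k ) ] = 0, where the sum is over all ordered pairs j ≠ k in {1,…,p}. -/

import Mathlib

open MeasureTheory

/-- The swap map on `ℝ^p × ℝ^p`: exchanges the `j`-th coordinates of the two
vectors for every `j ∈ S` and leaves the other coordinates unchanged. -/
def knockoffSwap {p : ℕ} (S : Finset (Fin p)) :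
    ((Fin p → ℝ) × (Fin p → ℝ)) → ((Fin p → ℝ) × (Fin p → ℝ)) :=
  fun b =>
    (fun j => if j ∈ S then b.2 j else b.1 j,
     fun j => if j ∈ S then b.1 j else b.2 j)

lemma knockoffSwap_measurable {p : ℕ} (S : Finset (Fin p)) :
    Measurable (knockoffSwap S) := by
  unfold knockoffSwap
  refine Measurable.prod ?_ ?_ <;>
  · refine measurable_pi_lambda _ fun j => ?_
    by_cases h : j ∈ S <;> simp only [h, if_true, if_false]
    · first
        | exact (measurable_pi_apply j).comp measurable_snd
        | exact (measurable_pi_apply j).comp measurable_fst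
    · first
        | exact (measurable_pi_apply j).comp measurable_fst
        | exact (measurable_pi_apply j).comp measurable_snd

lemma swap_integral_eq
    {Ω : Type*} [MeasurableSpace Ω] (P : Measure Ω) [IsProbabilityMeasure P]
    {p : ℕ} (X Xt : Ω → (Fin p → ℝ)) (hX : Measurable X) (hXt : Measurable Xt)
    (hswap : ∀ S : Finset (Fin p),
      P.map (fun ω => knockoffSwap S (X ω, Xt ω)) = P.map (fun ω => (X ω, Xt ω)))
    (S : Finset (Fin p)) (g : ((Fin p → ℝ) × (Fin p → ℝ)) → ℝ) (hg : Measurable g) :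
    ∫ ω, g (knockoffSwap S (X ω, Xt ω)) ∂P = ∫ ω, g (X ω, Xt ω) ∂P := by
  have hF : Measurable (fun ω => (X ω, Xt ω)) := hX.prodMk hXt
  have hφ : Measurable (fun ω => knockoffSwap S (X ω, Xt ω)) :=
    (knockoffSwap_measurable S).comp hF
  have h1 : ∫ ω, g (knockoffSwap S (X ω, Xt ω)) ∂P
      = ∫ c, g c ∂(P.map (fun ω => knockoffSwap S (X ω, Xt ω))) :=
    (integral_map hφ.aemeasurable hg.aestronglyMeasurable).symm
  have h2 : ∫ c, g c ∂(P.map (fun ω => (X ω, Xt ω))) = ∫ ω, g (X ω, Xt ω) ∂P := by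
    rw [integral_map hF.aemeasurable hg.aestronglyMeasurable]
  rw [h1, hswap S, h2]

/-- If `(X, X̃)` has square-integrable coordinates and its law is invariant under
every swap map (model-X knockoff exchangeability), then the knockoff diagnostic
statistic `∑_{j ≠ k} (X̃_j X̃_k + 2 X_j X̃_k − 3 X_j X_k)` has expectation zero. -/
theorem knockoff_diagnostic_mean_zero
    {Ω : Type*} [MeasurableSpace Ω] (P : Measure Ω) [IsProbabilityMeasure P]
    {p : ℕ} (X Xt : Ω → (Fin p → ℝ)) (hX : Measurable X) (hXt : Measurable Xt)
    (hL2X : ∀ j : Fin p, MemLp (fun ω => X ω j) 2 P)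
    (hL2Xt : ∀ j : Fin p, MemLp (fun ω => Xt ω j) 2 P)
    (hswap : ∀ S : Finset (Fin p),
      P.map (fun ω => knockoffSwap S (X ω, Xt ω)) = P.map (fun ω => (X ω, Xt ω))) :
    (∫ ω, ∑ j : Fin p, ∑ k ∈ Finset.univ.erase j,
      (Xt ω j * Xt ω k + 2 * (X ω j * Xt ω k) - 3 * (X ω j * X ω k)) ∂P) = 0 := by
  -- integrability of products
  have hint : ∀ (f g : Ω → Fin p → ℝ) (hf : ∀ j, MemLp (fun ω => f ω j) 2 P)
      (hg : ∀ j, MemLp (fun ω => g ω j) 2 P) (j k : Fin p),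
      Integrable (fun ω => f ω j * g ω k) P := by
    intro f g hf hg j k
    have h : MemLp ((fun ω => f ω j) • (fun ω => g ω k)) 1 P :=
      (hg k).smul (hf j) (hpqr := ⟨by simp [one_div, ENNReal.inv_two_add_inv_two]⟩)
    have := memLp_one_iff_integrable.mp h
    simpa [Pi.smul_apply, smul_eq_mul, Pi.mul_def] using this
  have hterm : ∀ j k : Fin p, Integrable (fun ω =>
      Xt ω j * Xt ω k + 2 * (X ω j * Xt ω k) - 3 * (X ω j * X ω k)) P := by
    intro j k
    exact ((hint Xt Xt hL2Xt hL2Xt j k).add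
      ((hint X Xt hL2X hL2Xt j k).const_mul 2)).sub
      ((hint X X hL2X hL2X j k).const_mul 3)
  -- key equalities
  have key1 : ∀ j k : Fin p, j ≠ k →
      ∫ ω, Xt ω j * Xt ω k ∂P = ∫ ω, X ω j * X ω k ∂P := by
    intro j k hjk
    have := swap_integral_eq P X Xt hX hXt hswap {j, k}
      (fun c => c.1 j * c.1 k)
      (((measurable_pi_apply j).comp measurable_fst).mul
        ((measurable_pi_apply k).comp measurable_fst))
    simpa [knockoffSwap] using this
  have key2 : ∀ j k : Fin p, j ≠ k →
      ∫ ω, X ω j * Xt ω k ∂P = ∫ ω, X ω j * X ω k ∂P := by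
    intro j k hjk
    have := swap_integral_eq P X Xt hX hXt hswap {k}
      (fun c => c.1 j * c.2 k)
      (((measurable_pi_apply j).comp measurable_fst).mul
        ((measurable_pi_apply k).comp measurable_snd))
    simpa [knockoffSwap, hjk] using this.symm
  rw [integral_finset_sum _ (fun j _ => integrable_finset_sum _ (fun k _ => hterm j k))]
  refine Finset.sum_eq_zero fun j _ => ?_
  rw [integral_finset_sum _ (fun k _ => hterm j k)]
  refine Finset.sum_eq_zero fun k hk => ?_
  have hjk : j ≠ k := (Finset.ne_of_mem_erase hk).symm
  have e1 : Integrable (fun ω => Xt ω j * Xt ω k + 2 * (X ω j * Xt ω k)) P := by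
    exact (hint Xt Xt hL2Xt hL2Xt j k).add ((hint X Xt hL2X hL2Xt j k).const_mul 2)
  have e2 : Integrable (fun ω => 3 * (X ω j * X ω k)) P :=
    (hint X X hL2X hL2X j k).const_mul 3
  rw [integral_sub e1 e2,
    integral_add (hint Xt Xt hL2Xt hL2Xt j k) ((hint X Xt hL2X hL2Xt j k).const_mul 2),
    integral_const_mul, integral_const_mul, key1 j k hjk, key2 j k hjk]
  ring
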